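/- Suppose that for some k with 3 ≤ k ≤ 6 there exists a connected finite graph G with a set P of k longest paths having no common vertex. Then for every sublinear function g : ℕ → ℝ (i.e., g(n)/n → 0 as n → ∞) there exist a connected finite graph H of some order n and a set Q of k longest paths of H such that f(H,Q) > g(n). (In the paper's construction, H is obtained from G by attaching a pendant edge at each end-vertex of each path of P and then subdividing every edge t times, giving f(H,Q) ≥ t while the order of H is at most n₀ + t(m₀ + 2k), where n₀ and m₀ are the number of vertices and edges of G.) -/

import Mathlib

open SimpleGraph Walk Sum


/-- `w` is a longest path of `G`: it is a path and no path of `G` is longer. -/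
def IsLongestPath {V : Type*} (G : SimpleGraph V) {u v : V} (w : G.Walk u v) : Prop :=
  w.IsPath ∧ ∀ (a b : V) (q : G.Walk a b), q.IsPath → q.length ≤ w.length

/-- The distance `d_G(x, V(w))` from a vertex `x` to the vertex set of a walk `w`. -/
noncomputable def distToWalk {V : Type*} (G : SimpleGraph V) (x : V) {u v : V}
    (w : G.Walk u v) : ℕ :=
  sInf {d : ℕ | ∃ y ∈ w.support, G.dist x y = d}

/-- The path-distance-function `f(G, 𝒫)` of a family `𝒫` of paths of `G`. -/
noncomputable def pdf {V : Type*} (G : SimpleGraph V) {k : ℕ}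
    (P : Fin k → Σ u : V, Σ v : V, G.Walk u v) : ℕ :=
  sInf {s : ℕ | ∃ x : V, s = ∑ i, distToWalk G x (P i).2.2}

set_option linter.unusedSectionVars false
set_option linter.unreachableTactic false
set_option linter.unusedTactic false
set_option maxHeartbeats 1000000

namespace NSB
attribute [local instance] Classical.propDecidable

/-- vertex with a unique neighbor lies at an end of any path through it -/
lemma mem_end_of_unique_nbr {X : Type*} {Γ : SimpleGraph X} {v : X}
    (hv : ∀ a b, Γ.Adj v a → Γ.Adj v b → a = b) :
    ∀ {x y : X} (R : Γ.Walk x y), R.IsPath → v ∈ R.support → v = x ∨ v = y := by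
  intro x y R
  induction R with
  | nil => intro _ h; simp at h; exact Or.inl h
  | @cons a b c h p ih =>
    intro hp hm
    rcases List.mem_cons.mp (by simpa using hm) with h1 | h1
    · exact Or.inl h1
    rcases ih hp.of_cons h1 with h2 | h2
    · subst h2
      cases p with
      | nil => exact Or.inr rfl
      | @cons _ w2 _ h2' p2 =>
        exfalso
        have hx : a = w2 := hv a w2 h.symm h2'
        have : a ∉ (Walk.cons h2' p2).support := ((Walk.cons_isPath_iff _ _).mp hp).2
        exact this (by rw [hx]; simp)
    · exact Or.inr h2

section Construction

variable {V : Type} [Fintype V] {k : ℕ} (G : SimpleGraph V)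
  (P : Fin k → Σ u : V, Σ v : V, G.Walk u v)

abbrev Vp (V : Type) (k : ℕ) : Type := V ⊕ (Fin k × Bool)

def attachV (p : Fin k × Bool) : V := if p.2 then (P p.1).2.1 else (P p.1).1

def Gp : SimpleGraph (Vp V k) where
  Adj a b :=
    match a, b with
    | inl a, inl b => G.Adj a b
    | inl a, inr p => a = attachV G P p
    | inr p, inl a => a = attachV G P p
    | inr _, inr _ => False
  symm := by constructor; rintro (a | p) (b | q) h <;> first | exact h.symm | exact h | exact h.elim
  loopless := by constructor; rintro (a | p) h; · exact G.irrefl h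
                 · exact h

@[simp] lemma gp_adj_inl_inl {a b : V} : (Gp G P).Adj (inl a) (inl b) ↔ G.Adj a b := Iff.rfl
@[simp] lemma gp_adj_inl_inr {a : V} {p : Fin k × Bool} :
    (Gp G P).Adj (inl a) (inr p) ↔ a = attachV G P p := Iff.rfl
@[simp] lemma gp_adj_inr_inl {a : V} {p : Fin k × Bool} :
    (Gp G P).Adj (inr p) (inl a) ↔ a = attachV G P p := Iff.rfl
@[simp] lemma gp_adj_inr_inr {p q : Fin k × Bool} : ¬ (Gp G P).Adj (inr p) (inr q) :=
  fun h => h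

def inlHom : G →g (Gp G P) := ⟨inl, fun h => h⟩

/-- the extended path `leaf — u_i — ⋯ — v_i — leaf` in `G'`. -/
lemma gp_adj_start (i : Fin k) : (Gp G P).Adj (inr (i, false)) (inl (P i).1) := by
  show (P i).1 = attachV G P _; simp [attachV]

lemma gp_adj_end (i : Fin k) : (Gp G P).Adj (inl (P i).2.1) (inr (i, true)) := by
  show (P i).2.1 = attachV G P _; simp [attachV]

def Pp (i : Fin k) : (Gp G P).Walk (inr (i, false)) (inr (i, true)) :=
  Walk.cons (gp_adj_start G P i)
    ((((P i).2.2).map (inlHom G P)).concat (gp_adj_end G P i))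

lemma Pp_length (i : Fin k) : (Pp G P i).length = (P i).2.2.length + 2 := by
  have h1 := Walk.length_cons (gp_adj_start G P i) ((((P i).2.2).map (inlHom G P)).concat (gp_adj_end G P i))
  have h2 := Walk.length_concat (((P i).2.2).map (inlHom G P)) (gp_adj_end G P i)
  have h3 := Walk.length_map (inlHom G P) (P i).2.2
  exact h1.trans (congrArg (· + 1) (h2.trans (congrArg (· + 1) h3)))

lemma Pp_support (i : Fin k) :
    (Pp G P i).support =
      inr (i, false) :: ((P i).2.2.support.map inl ++ [inr (i, true)]) := by
  simp [Pp, Walk.support_concat, Walk.support_map, inlHom, List.concat_eq_append]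
  exact fun a _ => rfl

lemma Pp_isPath (i : Fin k) (hp : (P i).2.2.IsPath) : (Pp G P i).IsPath := by
  rw [Walk.isPath_def, Pp_support]
  simp only [List.nodup_cons, List.mem_append, List.mem_map, List.mem_singleton]
  refine ⟨?_, ?_⟩
  · rintro (⟨a, _, h⟩ | h) <;> simp_all
  · rw [List.nodup_append]
    refine ⟨(hp.support_nodup).map (fun a b => by simp), List.nodup_singleton _, ?_⟩
    intro a ha b hb hab; subst hab
    simp only [List.mem_singleton] at hb
    subst hb
    rcases List.mem_map.mp ha with ⟨c, _, hc⟩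
    simp at hc

/-- membership of `inl`-vertices in `Pp`-support -/
lemma inl_mem_Pp_support_iff (i : Fin k) (a : V) :
    inl a ∈ (Pp G P i).support ↔ a ∈ (P i).2.2.support := by
  rw [Pp_support]
  simp

lemma inr_mem_Pp_support_iff (i : Fin k) (p : Fin k × Bool) :
    (inr p : Vp V k) ∈ (Pp G P i).support ↔ p.1 = i := by
  rw [Pp_support]
  rcases p with ⟨j, b⟩
  constructor
  · intro h
    simp only [List.mem_cons, List.mem_append, List.mem_map, List.mem_singleton] at h
    rcases h with h | ⟨⟨c, _, hc⟩ | h⟩ <;> simp_all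
  · rintro rfl
    rcases b with _ | _ <;> simp

/-- unique neighbor of a leaf in `G'` -/
lemma gp_leaf_unique_nbr (p : Fin k × Bool) :
    ∀ a b, (Gp G P).Adj (inr p) a → (Gp G P).Adj (inr p) b → a = b := by
  rintro (a | q) (b | r) ha hb
  · rw [gp_adj_inr_inl] at ha hb; rw [ha, hb]
  · exact absurd hb (gp_adj_inr_inr G P)
  · exact absurd ha (gp_adj_inr_inr G P)
  · exact absurd ha (gp_adj_inr_inr G P)

section PathBounds

lemma path_self_length {X : Type*} {Γ : SimpleGraph X} {u : X} (q : Γ.Walk u u)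
    (hq : q.IsPath) : q.length = 0 := by
  cases q with
  | nil => rfl
  | cons h p =>
    exact absurd (p.end_mem_support) ((Walk.cons_isPath_iff _ _).mp hq).2

variable (L : ℕ) (hub : ∀ (a b : V) (q : G.Walk a b), q.IsPath → q.length ≤ L)

/-- an all-`inl` walk in `G'` pulls back to `G` -/
lemma gp_pullback : ∀ {x y : Vp V k} (q : (Gp G P).Walk x y),
    (∀ w ∈ q.support, ∃ c : V, w = inl c) →
    ∃ (a b : V) (r : G.Walk a b), x = inl a ∧ y = inl b ∧
      r.support.map inl = q.support ∧ r.length = q.length := by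
  intro x y q
  induction q with
  | nil =>
    rename_i u
    intro hall
    obtain ⟨c, rfl⟩ := hall u (by simp)
    exact ⟨c, c, Walk.nil, rfl, rfl, by simp, by simp⟩
  | @cons x w z h p ih =>
    intro hall
    obtain ⟨a, b, r, rfl, rfl, hsupp, hlen⟩ := ih (fun u hu => hall u (by simp [hu]))
    obtain ⟨c, rfl⟩ := hall x (by simp)
    refine ⟨c, b, Walk.cons ((gp_adj_inl_inl G P).mp h) r, rfl, rfl, ?_, by simp [hlen]⟩
    simp [hsupp]

include hub

/-- both ends `inl`: length ≤ L -/
lemma gp_C1 {a b : V} (q : (Gp G P).Walk (inl a) (inl b)) (hq : q.IsPath) :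
    q.length ≤ L := by
  have hall : ∀ w ∈ q.support, ∃ c : V, w = inl c := by
    intro w hw
    rcases w with w | p
    · exact ⟨w, rfl⟩
    · exfalso
      rcases mem_end_of_unique_nbr (gp_leaf_unique_nbr G P p) q hq hw with h | h <;> simp at h
  obtain ⟨a', b', r, ha', hb', hsupp, hlen⟩ := gp_pullback G P q hall
  have hnd : r.support.Nodup := by
    have := hq.support_nodup
    rw [← hsupp] at this
    exact this.of_map inl
  have hrp : r.IsPath := (Walk.isPath_def r).mpr hnd
  have := hub _ _ r hrp
  omega

omit hub

/-- strip the pendant step at the start -/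
lemma gp_strip {p : Fin k × Bool} {y : Vp V k} (q : (Gp G P).Walk (inr p) y)
    (hq : q.IsPath) (hne : (inr p : Vp V k) ≠ y) :
    ∃ q' : (Gp G P).Walk (inl (attachV G P p)) y,
      q.length = q'.length + 1 ∧ q'.IsPath := by
  cases q with
  | nil => exact absurd rfl hne
  | @cons _ w _ h q' =>
    rcases w with a | r
    · obtain rfl : a = attachV G P p := (gp_adj_inr_inl G P).mp h
      exact ⟨q', by simp, hq.of_cons⟩
    · exact absurd h (gp_adj_inr_inr G P)

include hub

/-- end at a leaf, start `inl`: length ≤ L + 1 -/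
lemma gp_C2a {a : V} {p : Fin k × Bool} (q : (Gp G P).Walk (inl a) (inr p))
    (hq : q.IsPath) : q.length ≤ L + 1 := by
  obtain ⟨q2, hlen, hq2⟩ := gp_strip G P q.reverse hq.reverse (by simp)
  have := gp_C1 G P L hub q2.reverse hq2.reverse
  have hrev : q.reverse.length = q.length := q.length_reverse
  have : q2.reverse.length = q2.length := q2.length_reverse
  omega

/-- start `inl`: length ≤ L + 1 -/
lemma gp_C2 {a : V} {y : Vp V k} (q : (Gp G P).Walk (inl a) y) (hq : q.IsPath) :
    q.length ≤ L + 1 := by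
  rcases y with b | p
  · exact le_trans (gp_C1 G P L hub q hq) (by omega)
  · exact gp_C2a G P L hub q hq

/-- end `inl`: length ≤ L + 1 -/
lemma gp_C2' {b : V} {x : Vp V k} (q : (Gp G P).Walk x (inl b)) (hq : q.IsPath) :
    q.length ≤ L + 1 := by
  have := gp_C2 G P L hub q.reverse hq.reverse
  have hrev : q.reverse.length = q.length := q.length_reverse
  omega

/-- any path in `G'` has length ≤ L + 2 -/
lemma gp_C3 {x y : Vp V k} (q : (Gp G P).Walk x y) (hq : q.IsPath) :
    q.length ≤ L + 2 := by
  rcases x with a | p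
  · exact le_trans (gp_C2 G P L hub q hq) (by omega)
  rcases y with b | p'
  · exact le_trans (gp_C2' G P L hub q hq) (by omega)
  by_cases hne : (inr p : Vp V k) = inr p'
  · obtain rfl : p = p' := by injection hne
    have := path_self_length q hq
    omega
  · obtain ⟨q2, hlen, hq2⟩ := gp_strip G P q hq hne
    have := gp_C2 G P L hub q2 hq2
    omega

end PathBounds


section Subdivision

/-- a fixed injection of `V'` into `ℕ`, to orient edges -/
noncomputable def ordv : Vp V k → ℕ := fun v => (Fintype.equivFin (Vp V k) v : ℕ)

lemma ordv_inj : Function.Injective (ordv (V := V) (k := k)) := by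
  intro a b h
  have := (Fintype.equivFin (Vp V k)).injective (Fin.val_injective h)
  exact this

/-- oriented edges of `G'` -/
abbrev Ep : Type := {e : Vp V k × Vp V k // (Gp G P).Adj e.1 e.2 ∧ ordv e.1 < ordv e.2}

noncomputable instance : Fintype (Ep G P) := by
  unfold Ep; exact Fintype.ofFinite _

variable (t : ℕ)

/-- vertices of the subdivision -/
abbrev WW : Type := Vp V k ⊕ (Ep G P × Fin t)

def HAdj : WW G P t → WW G P t → Prop := fun a b =>
  match a, b with
  | inl _, inl _ => False
  | inl u, inr (e, j) => (u = e.1.1 ∧ (j : ℕ) = 0) ∨ (u = e.1.2 ∧ (j : ℕ) + 1 = t)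
  | inr (e, j), inl u => (u = e.1.1 ∧ (j : ℕ) = 0) ∨ (u = e.1.2 ∧ (j : ℕ) + 1 = t)
  | inr (e, j), inr (e', j') => e = e' ∧ ((j : ℕ) + 1 = (j' : ℕ) ∨ (j' : ℕ) + 1 = (j : ℕ))

/-- the `t`-subdivision of `G'` -/
def HH : SimpleGraph (WW G P t) where
  Adj := HAdj G P t
  symm := by
    constructor; rintro (u | ⟨e, j⟩) (v | ⟨e', j'⟩) h
    · exact h
    · exact h
    · exact h
    · exact ⟨h.1.symm, h.2.symm⟩
  loopless := by
    constructor; rintro (u | ⟨e, j⟩) h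
    · exact h
    · rcases h with ⟨-, h | h⟩ <;> omega

@[simp] lemma hh_adj_inl_inl {u v : Vp V k} : ¬ (HH G P t).Adj (inl u) (inl v) := fun h => h

lemma hh_adj_inl_inr {u : Vp V k} {e : Ep G P} {j : Fin t} :
    (HH G P t).Adj (inl u) (inr (e, j)) ↔
      (u = e.1.1 ∧ (j : ℕ) = 0) ∨ (u = e.1.2 ∧ (j : ℕ) + 1 = t) := Iff.rfl

lemma hh_adj_inr_inl {u : Vp V k} {e : Ep G P} {j : Fin t} :
    (HH G P t).Adj (inr (e, j)) (inl u) ↔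
      (u = e.1.1 ∧ (j : ℕ) = 0) ∨ (u = e.1.2 ∧ (j : ℕ) + 1 = t) := Iff.rfl

lemma hh_adj_inr_inr {e e' : Ep G P} {j j' : Fin t} :
    (HH G P t).Adj (inr (e, j)) (inr (e', j')) ↔
      e = e' ∧ ((j : ℕ) + 1 = (j' : ℕ) ∨ (j' : ℕ) + 1 = (j : ℕ)) := Iff.rfl

variable {t}

/-- the ascending walk inside a subdivided edge, from interior position `j` to the top. -/
def ascFrom (e : Ep G P) : (d : ℕ) → (j : ℕ) → (h : j + d + 1 = t) →
    (HH G P t).Walk (inr (e, ⟨j, by omega⟩)) (inl e.1.2)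
  | 0, j, h =>
      Walk.cons (by rw [hh_adj_inr_inl]; right; exact ⟨rfl, by show j + 1 = t; omega⟩)
        Walk.nil
  | d + 1, j, h =>
      Walk.cons (v := inr (e, ⟨j + 1, by omega⟩))
        (by rw [hh_adj_inr_inr]; exact ⟨rfl, Or.inl (by show j + 1 = j + 1; rfl)⟩)
        (ascFrom e d (j + 1) (by omega))

lemma ascFrom_length (e : Ep G P) : ∀ (d j : ℕ) (h : j + d + 1 = t),
    (ascFrom G P e d j h).length = d + 1 := by
  intro d
  induction d with
  | zero => intro j h; rfl
  | succ d ih => intro j h; simp only [ascFrom, Walk.length_cons, ih]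

lemma ascFrom_mem_support (e : Ep G P) : ∀ (d j : ℕ) (h : j + d + 1 = t),
    ∀ w ∈ (ascFrom G P e d j h).support,
      w = inl e.1.2 ∨ ∃ j' : Fin t, j ≤ (j' : ℕ) ∧ w = inr (e, j') := by
  intro d
  induction d with
  | zero =>
    intro j h w hw
    simp only [ascFrom, Walk.support_cons, Walk.support_nil, List.mem_cons,
      List.mem_singleton, List.not_mem_nil, or_false] at hw
    rcases hw with rfl | rfl
    · exact Or.inr ⟨⟨j, by omega⟩, le_refl _, rfl⟩
    · exact Or.inl rfl
  | succ d ih =>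
    intro j h w hw
    simp only [ascFrom, Walk.support_cons, List.mem_cons] at hw
    rcases hw with rfl | hw
    · exact Or.inr ⟨⟨j, by omega⟩, le_refl _, rfl⟩
    · rcases ih (j + 1) (by omega) w hw with h1 | ⟨j', hj', h1⟩
      · exact Or.inl h1
      · exact Or.inr ⟨j', by omega, h1⟩

lemma ascFrom_nodup (e : Ep G P) : ∀ (d j : ℕ) (h : j + d + 1 = t),
    (ascFrom G P e d j h).support.Nodup := by
  intro d
  induction d with
  | zero =>
    intro j h
    simp only [ascFrom, Walk.support_cons, Walk.support_nil]
    simp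
  | succ d ih =>
    intro j h
    simp only [ascFrom, Walk.support_cons, List.nodup_cons]
    refine ⟨?_, ih (j + 1) (by omega)⟩
    intro hmem
    rcases ascFrom_mem_support G P e d (j + 1) (by omega) _ hmem with h1 | ⟨j', hj', h1⟩
    · exact absurd h1 (by simp)
    · have := (Sum.inr_injective (h1)) -- (e, ⟨j,_⟩) = (e, j')
      have hj : (⟨j, by omega⟩ : Fin t) = j' := by
        rw [Prod.ext_iff] at this; exact this.2
      have : j = (j' : ℕ) := by rw [← hj]
      omega

end Subdivision


section Lift

variable {t : ℕ}

/-- the subdivided edge walk from `inl u` to `inl v` -/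
noncomputable def edgeWalk {u v : Vp V k} (h : (Gp G P).Adj u v) (ht : 1 ≤ t) :
    (HH G P t).Walk (inl u) (inl v) :=
  if hor : ordv u < ordv v then
    Walk.cons (u := inl u) (v := inr (⟨(u, v), h, hor⟩, ⟨0, by omega⟩))
      ((hh_adj_inl_inr G P t).mpr (Or.inl ⟨rfl, rfl⟩))
      (ascFrom G P ⟨(u, v), h, hor⟩ (t - 1) 0 (by omega))
  else
    (Walk.cons (u := inl v)
      (v := inr (⟨(v, u), h.symm, by
        rcases lt_or_gt_of_ne (fun hc => h.ne (ordv_inj hc)) with h1 | h1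
        · exact absurd h1 hor
        · exact h1⟩, ⟨0, by omega⟩))
      ((hh_adj_inl_inr G P t).mpr (Or.inl ⟨rfl, rfl⟩))
      (ascFrom G P _ (t - 1) 0 (by omega))).reverse

lemma edgeWalk_length {u v : Vp V k} (h : (Gp G P).Adj u v) (ht : 1 ≤ t) :
    (edgeWalk G P h ht).length = t + 1 := by
  unfold edgeWalk
  split_ifs with hor
  · simp [ascFrom_length]; omega
  · simp [ascFrom_length]; omega

lemma edgeWalk_mem_support {u v : Vp V k} (h : (Gp G P).Adj u v) (ht : 1 ≤ t) :
    ∀ w ∈ (edgeWalk G P h ht).support, w = inl u ∨ w = inl v ∨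
      ∃ (e : Ep G P) (j : Fin t),
        ((e.1.1 = u ∧ e.1.2 = v) ∨ (e.1.1 = v ∧ e.1.2 = u)) ∧ w = inr (e, j) := by
  intro w hw
  unfold edgeWalk at hw
  split_ifs at hw with hor
  · simp only [Walk.support_cons, List.mem_cons] at hw
    rcases hw with rfl | hw
    · exact Or.inl rfl
    rcases ascFrom_mem_support G P _ _ _ _ w hw with h1 | ⟨j', _, h1⟩
    · exact Or.inr (Or.inl h1)
    · exact Or.inr (Or.inr ⟨_, j', Or.inl ⟨rfl, rfl⟩, h1⟩)
  · rw [Walk.support_reverse, List.mem_reverse] at hw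
    simp only [Walk.support_cons, List.mem_cons] at hw
    rcases hw with rfl | hw
    · exact Or.inr (Or.inl rfl)
    rcases ascFrom_mem_support G P _ _ _ _ w hw with h1 | ⟨j', _, h1⟩
    · exact Or.inl h1
    · exact Or.inr (Or.inr ⟨_, j', Or.inr ⟨rfl, rfl⟩, h1⟩)

lemma edgeWalk_nodup {u v : Vp V k} (h : (Gp G P).Adj u v) (ht : 1 ≤ t) :
    (edgeWalk G P h ht).support.Nodup := by
  unfold edgeWalk
  split_ifs with hor
  · simp only [Walk.support_cons, List.nodup_cons]
    refine ⟨?_, ascFrom_nodup G P _ _ _ _⟩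
    intro hmem
    rcases ascFrom_mem_support G P _ _ _ _ _ hmem with h1 | ⟨j', _, h1⟩
    · exact h.ne (by injection h1)
    · exact (by injection h1 : False)
  · rw [Walk.support_reverse, List.nodup_reverse]
    simp only [Walk.support_cons, List.nodup_cons]
    refine ⟨?_, ascFrom_nodup G P _ _ _ _⟩
    intro hmem
    rcases ascFrom_mem_support G P _ _ _ _ _ hmem with h1 | ⟨j', _, h1⟩
    · exact h.ne (by injection h1; simp_all)
    · exact (by injection h1 : False)

/-- lift of a walk in `G'` to the subdivision -/
noncomputable def liftWalk (ht : 1 ≤ t) : {x y : Vp V k} → (q : (Gp G P).Walk x y) →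
    (HH G P t).Walk (inl x) (inl y)
  | _, _, Walk.nil => Walk.nil
  | _, _, Walk.cons h q => (edgeWalk G P h ht).append (liftWalk ht q)

lemma liftWalk_length (ht : 1 ≤ t) {x y : Vp V k} (q : (Gp G P).Walk x y) :
    (liftWalk G P ht q).length = (t + 1) * q.length := by
  induction q with
  | nil => simp [liftWalk]
  | cons h q ih =>
    simp only [liftWalk, Walk.length_append, ih, edgeWalk_length, Walk.length_cons]
    ring

lemma liftWalk_mem_support (ht : 1 ≤ t) {x y : Vp V k} (q : (Gp G P).Walk x y) :
    ∀ w ∈ (liftWalk G P ht q).support,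
      (∃ z ∈ q.support, w = inl z) ∨
      ∃ (e : Ep G P) (j : Fin t), w = inr (e, j) ∧ s(e.1.1, e.1.2) ∈ q.edges := by
  induction q with
  | nil =>
    intro w hw
    simp only [liftWalk, Walk.support_nil, List.mem_singleton] at hw
    exact Or.inl ⟨_, by simp, hw⟩
  | @cons a b c h q ih =>
    intro w hw
    rw [liftWalk, Walk.mem_support_append_iff] at hw
    rcases hw with hw | hw
    · rcases edgeWalk_mem_support G P h ht w hw with rfl | rfl | ⟨e, j, hor, rfl⟩
      · exact Or.inl ⟨a, by simp, rfl⟩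
      · exact Or.inl ⟨b, by simp, rfl⟩
      · refine Or.inr ⟨e, j, rfl, ?_⟩
        rcases hor with ⟨h1, h2⟩ | ⟨h1, h2⟩
        · rw [h1, h2]; simp
        · rw [h1, h2, Sym2.eq_swap]; simp
    · rcases ih w hw with ⟨z, hz, rfl⟩ | ⟨e, j, rfl, he⟩
      · exact Or.inl ⟨z, by simp [hz], rfl⟩
      · exact Or.inr ⟨e, j, rfl, by simp [he]⟩

lemma liftWalk_isPath (ht : 1 ≤ t) {x y : Vp V k} (q : (Gp G P).Walk x y)
    (hq : q.IsPath) : (liftWalk G P ht q).IsPath := by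
  induction q with
  | nil => simp [liftWalk]
  | @cons a b c h q ih =>
    rw [Walk.cons_isPath_iff] at hq
    have ihp := ih hq.1
    rw [liftWalk, Walk.isPath_def, Walk.support_append]
    apply List.Nodup.append (edgeWalk_nodup G P h ht)
    · exact ihp.support_nodup.tail
    · -- disjointness
      intro w hw1 hw2
      have hw2' : w ∈ (liftWalk G P ht q).support := List.mem_of_mem_tail hw2
      rcases edgeWalk_mem_support G P h ht w hw1 with rfl | rfl | ⟨e, j, hor, rfl⟩
      · rcases liftWalk_mem_support G P ht q _ hw2' with ⟨z, hz, hzz⟩ | ⟨e, j, hzz, he⟩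
        · obtain rfl : a = z := by injection hzz
          exact hq.2 hz
        · exact (by injection hzz : False)
      · -- w = inl b, the head of liftWalk q; can't be in the tail
        have : (liftWalk G P ht q).support = inl b :: (liftWalk G P ht q).support.tail :=
          (liftWalk G P ht q).support_eq_cons
        have hnd := ihp.support_nodup
        rw [this, List.nodup_cons] at hnd
        exact hnd.1 hw2
      · rcases liftWalk_mem_support G P ht q _ hw2' with ⟨z, hz, hzz⟩ | ⟨e', j', hzz, he⟩
        · exact (by injection hzz : False)
        · obtain ⟨rfl, rfl⟩ : e = e' ∧ j = j' := by
            have := Sum.inr_injective hzz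
            exact ⟨congrArg Prod.fst this, congrArg Prod.snd this⟩
          have : a ∈ q.support := by
            rcases hor with ⟨h1, h2⟩ | ⟨h1, h2⟩
            · rw [h1, h2] at he
              exact q.fst_mem_support_of_mem_edges he
            · rw [h1, h2, Sym2.eq_swap] at he
              exact q.fst_mem_support_of_mem_edges he
          exact hq.2 this

end Lift


section Structure

variable {t : ℕ}

lemma run (ht : 1 ≤ t) : ∀ {x y : WW G P t} (R : (HH G P t).Walk x y),
    R.IsPath → ∀ (e : Ep G P) (j0 : Fin t), x = inr (e, j0) →
    (∀ w ∈ R.support, ∃ j : Fin t, w = inr (e, j)) ∨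
    ∃ (v : Vp V k) (R' : (HH G P t).Walk (inl v) y) (c : ℕ) (S : Finset (Fin t)),
      (v = e.1.1 ∨ v = e.1.2) ∧ R'.IsPath ∧ R.length = c + 1 + R'.length ∧
      S.card = c + 1 ∧ (∀ s ∈ S, (inr (e, s) : WW G P t) ∈ R.support) ∧
      (∀ w ∈ R'.support, w ∈ R.support) := by
  intro x y R
  induction R with
  | nil =>
    intro hR e j0 hx
    subst hx
    left
    intro w hw
    simp only [Walk.support_nil, List.mem_singleton] at hw
    exact ⟨j0, hw⟩
  | @cons a b c h p ih =>
    intro hR e j0 hx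
    subst hx
    rcases b with v | ⟨e', j1⟩
    · -- exit to a branch vertex
      rw [hh_adj_inr_inl] at h
      right
      refine ⟨v, p, 0, {j0}, ?_, hR.of_cons, by simp; omega, by simp, ?_, ?_⟩
      · rcases h with ⟨h1, -⟩ | ⟨h1, -⟩
        · exact Or.inl h1
        · exact Or.inr h1
      · intro s hs
        simp only [Finset.mem_singleton] at hs
        subst hs
        simp
      · intro w hw
        simp [hw]
    · -- continue inside the edge
      rw [hh_adj_inr_inr] at h
      obtain ⟨rfl, -⟩ := h
      rcases ih hR.of_cons e j1 rfl with hall | ⟨v, R', c', S, hv, hR', hlen, hS, hSm, hsub⟩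
      · left
        intro w hw
        simp only [Walk.support_cons, List.mem_cons] at hw
        rcases hw with rfl | hw
        · exact ⟨j0, rfl⟩
        · exact hall w hw
      · right
        have hj0S : j0 ∉ S := by
          intro hmem
          have := hSm j0 hmem
          exact ((Walk.cons_isPath_iff _ _).mp hR).2 this
        refine ⟨v, R', c' + 1, insert j0 S, hv, hR', by simp [hlen]; omega, ?_, ?_, ?_⟩
        · rw [Finset.card_insert_of_notMem hj0S, hS]
        · intro s hs
          rcases Finset.mem_insert.mp hs with rfl | hs
          · simp
          · simp [hSm s hs]
        · intro w hw
          simp [hsub w hw]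

lemma front (ht : 1 ≤ t) : ∀ (n : ℕ) {x y : WW G P t} (R : (HH G P t).Walk x y),
    R.length ≤ n → R.IsPath → ∀ u : Vp V k, x = inl u →
    ∃ (b : Vp V k) (q : (Gp G P).Walk u b) (a : ℕ),
      q.IsPath ∧ a ≤ t ∧ R.length ≤ (t + 1) * q.length + a ∧
      (1 ≤ a → ∃ p, y = inr p) ∧ (a = 0 → y = inl b) ∧
      (∀ w ∈ q.support, (inl w : WW G P t) ∈ R.support) := by
  intro n
  induction n with
  | zero =>
    intro x y R hlen hR u hx
    subst hx
    cases R with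
    | nil => exact ⟨u, Walk.nil, 0, by simp, by omega, by simp, by omega,
        fun _ => rfl, by simp⟩
    | cons h p => simp at hlen
  | succ n ih =>
    intro x y R hlen hR u hx
    subst hx
    cases R with
    | nil => exact ⟨u, Walk.nil, 0, by simp, by omega, by simp, by omega,
        fun _ => rfl, by simp⟩
    | @cons _ b _ h p =>
      rcases b with v | ⟨e, j0⟩
      · exact absurd h (hh_adj_inl_inl G P t)
      have hu : u = e.1.1 ∨ u = e.1.2 := by
        rw [hh_adj_inl_inr] at h
        rcases h with ⟨h1, -⟩ | ⟨h1, -⟩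
        · exact Or.inl h1
        · exact Or.inr h1
      rcases run G P ht p hR.of_cons e j0 rfl with hall |
        ⟨v, R', c, S, hv, hR', hplen, hS, hSm, hsub⟩
      · -- the rest stays inside the interior of `e`
        have hat : p.length + 1 ≤ t := by
          have hnd := hR.of_cons.support_nodup
          have hlen2 : p.support.length = p.length + 1 := p.length_support
          have hcard : p.support.toFinset.card = p.support.length :=
            List.toFinset_card_of_nodup hnd
          have hsubs : p.support.toFinset ⊆
              Finset.univ.image (fun j : Fin t => (inr (e, j) : WW G P t)) := by
            intro w hw
            rcases hall w (List.mem_toFinset.mp hw) with ⟨j, rfl⟩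
            exact Finset.mem_image.mpr ⟨j, Finset.mem_univ _, rfl⟩
          have := Finset.card_le_card hsubs
          have himg := Finset.card_image_le
            (s := (Finset.univ : Finset (Fin t)))
            (f := fun j : Fin t => (inr (e, j) : WW G P t))
          simp only [Finset.card_univ, Fintype.card_fin] at himg
          omega
        refine ⟨u, Walk.nil, p.length + 1, by simp, hat, by simp, ?_, by omega, by simp⟩
        intro _
        rcases hall y (p.end_mem_support) with ⟨j, hj⟩
        exact ⟨(e, j), hj⟩
      · -- recurse after the branch vertex v
        have hvne : v ≠ u := by
          intro hvu
          subst hvu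
          have : (inl v : WW G P t) ∈ p.support := hsub _ (Walk.start_mem_support R')
          exact ((Walk.cons_isPath_iff _ _).mp hR).2 this
        have hadj : (Gp G P).Adj u v := by
          rcases hu with rfl | rfl <;> rcases hv with rfl | rfl
          · exact absurd rfl hvne
          · exact e.2.1
          · exact e.2.1.symm
          · exact absurd rfl hvne
        have hc1 : c + 1 ≤ t := by
          have := Finset.card_le_univ S
          simp only [Finset.card_univ, Fintype.card_fin] at this
          omega
        have hR'len : R'.length ≤ n := by
          simp only [Walk.length_cons] at hlen
          omega
        obtain ⟨b, q', a, hq'p, ha, hq'len, ha1, ha0, hq's⟩ :=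
          ih R' hR'len hR' v rfl
        have hunotq' : u ∉ q'.support := by
          intro hmem
          have : (inl u : WW G P t) ∈ p.support := hsub _ (hq's u hmem)
          exact ((Walk.cons_isPath_iff _ _).mp hR).2 this
        refine ⟨b, Walk.cons hadj q', a, (Walk.cons_isPath_iff _ _).mpr ⟨hq'p, hunotq'⟩,
          ha, ?_, ha1, ha0, ?_⟩
        · have hexp : (t + 1) * (q'.length + 1) = (t + 1) * q'.length + (t + 1) := by ring
          simp only [Walk.length_cons, hexp]
          omega
        · intro w hw
          simp only [Walk.support_cons, List.mem_cons] at hw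
          rcases hw with rfl | hw
          · simp
          · have := hsub _ (hq's w hw)
            simp [this]

end Structure


section UpperBound

variable {t : ℕ}

lemma interior_count (e : Ep G P) {x y : WW G P t} (R : (HH G P t).Walk x y)
    (hR : R.IsPath) (hall : ∀ w ∈ R.support, ∃ j : Fin t, w = inr (e, j)) :
    R.length + 1 ≤ t := by
  have hnd := hR.support_nodup
  have hlen2 : R.support.length = R.length + 1 := R.length_support
  have hcard : R.support.toFinset.card = R.support.length :=
    List.toFinset_card_of_nodup hnd
  have hsubs : R.support.toFinset ⊆
      Finset.univ.image (fun j : Fin t => (inr (e, j) : WW G P t)) := by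
    intro w hw
    rcases hall w (List.mem_toFinset.mp hw) with ⟨j, rfl⟩
    exact Finset.mem_image.mpr ⟨j, Finset.mem_univ _, rfl⟩
  have h1 := Finset.card_le_card hsubs
  have himg := Finset.card_image_le
    (s := (Finset.univ : Finset (Fin t)))
    (f := fun j : Fin t => (inr (e, j) : WW G P t))
  simp only [Finset.card_univ, Fintype.card_fin] at himg
  omega

/-- a leaf branch-vertex has a unique neighbor in the subdivision -/
lemma hh_leaf_unique_nbr (ht : 1 ≤ t) (p : Fin k × Bool) :
    ∀ a b : WW G P t, (HH G P t).Adj (inl (inr p)) a → (HH G P t).Adj (inl (inr p)) b →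
      a = b := by
  have key : ∀ (e : Ep G P) (j : Fin t),
      (HH G P t).Adj (inl (inr p)) (inr (e, j)) →
      (e.1.1 = inr p ∧ e.1.2 = inl (attachV G P p) ∧ (j : ℕ) = 0) ∨
      (e.1.2 = inr p ∧ e.1.1 = inl (attachV G P p) ∧ (j : ℕ) + 1 = t) := by
    intro e j h
    rw [hh_adj_inl_inr] at h
    rcases h with ⟨h1, h2⟩ | ⟨h1, h2⟩
    · left
      refine ⟨h1.symm, ?_, h2⟩
      have := e.2.1
      rw [← h1] at this
      rcases he : e.1.2 with a | r
      · rw [he] at this; exact congrArg inl ((gp_adj_inr_inl G P).mp this)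
      · rw [he] at this; exact absurd this (gp_adj_inr_inr G P)
    · right
      refine ⟨h1.symm, ?_, h2⟩
      have := e.2.1
      rw [← h1] at this
      rcases he : e.1.1 with a | r
      · rw [he] at this
        exact congrArg inl ((gp_adj_inr_inl G P).mp this.symm)
      · rw [he] at this; exact absurd this.symm (gp_adj_inr_inr G P)
  rintro (a | ⟨e, j⟩) (b | ⟨e', j'⟩) ha hb
  · exact absurd ha (hh_adj_inl_inl G P t)
  · exact absurd ha (hh_adj_inl_inl G P t)
  · exact absurd hb (hh_adj_inl_inl G P t)
  rcases key e j ha with ⟨h1, h2, h3⟩ | ⟨h1, h2, h3⟩ <;>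
    rcases key e' j' hb with ⟨h1', h2', h3'⟩ | ⟨h1', h2', h3'⟩
  · have he : e = e' := Subtype.ext (Prod.ext (h1.trans h1'.symm) (h2.trans h2'.symm))
    subst he
    have : j = j' := Fin.ext (by omega)
    rw [this]
  · exfalso
    have o1 := e.2.2
    have o2 := e'.2.2
    rw [h1, h2] at o1
    rw [h1', h2'] at o2
    omega
  · exfalso
    have o1 := e.2.2
    have o2 := e'.2.2
    rw [h1, h2] at o1
    rw [h1', h2'] at o2
    omega
  · have he : e = e' := Subtype.ext (Prod.ext (h2.trans h2'.symm) (h1.trans h1'.symm))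
    subst he
    have : j = j' := Fin.ext (by omega)
    rw [this]

/-- structural decomposition of any path in the subdivision -/
lemma hh_struct (ht : 1 ≤ t) {x y : WW G P t} (R : (HH G P t).Walk x y)
    (hR : R.IsPath) :
    (R.length + 1 ≤ t) ∨
    ∃ (u b : Vp V k) (q : (Gp G P).Walk u b) (a₁ a₂ : ℕ),
      q.IsPath ∧ a₁ ≤ t ∧ a₂ ≤ t ∧
      R.length ≤ (t + 1) * q.length + a₁ + a₂ ∧
      ((x = inl u ∧ a₁ = 0) ∨ (∃ ip, x = inr ip)) ∧
      (1 ≤ a₂ → ∃ ip, y = inr ip) ∧ (a₂ = 0 → y = inl b) ∧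
      (∀ w ∈ q.support, (inl w : WW G P t) ∈ R.support) := by
  rcases x with u | ⟨e, j0⟩
  · obtain ⟨b, q, a, hqp, ha, hlen, h1, h0, hsupp⟩ :=
      front G P ht R.length R (le_refl _) hR u rfl
    exact Or.inr ⟨u, b, q, 0, a, hqp, by omega, ha, by omega, Or.inl ⟨rfl, rfl⟩,
      h1, h0, hsupp⟩
  · rcases run G P ht R hR e j0 rfl with hall | ⟨v, R', c, S, hv, hR', hlen, hS, hSm, hsub⟩
    · exact Or.inl (interior_count G P e R hR hall)
    · obtain ⟨b, q, a, hqp, ha, hlen', h1, h0, hsupp⟩ :=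
        front G P ht R'.length R' (le_refl _) hR' v rfl
      have hc1 : c + 1 ≤ t := by
        have := Finset.card_le_univ S
        simp only [Finset.card_univ, Fintype.card_fin] at this
        omega
      refine Or.inr ⟨v, b, q, c + 1, a, hqp, hc1, ha, by omega, Or.inr ⟨_, rfl⟩,
        h1, h0, ?_⟩
      intro w hw
      exact hsub _ (hsupp w hw)

variable (L : ℕ) (hub : ∀ (a b : V) (q : G.Walk a b), q.IsPath → q.length ≤ L)
include hub

/-- THE upper bound: no path of the subdivision is longer than `(t+1)(L+2)`. -/
lemma hh_path_le (ht : 1 ≤ t) {x y : WW G P t} (R : (HH G P t).Walk x y)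
    (hR : R.IsPath) : R.length ≤ (t + 1) * (L + 2) := by
  have hexp : (t + 1) * (L + 2) = (t + 1) * L + 2 * t + 2 := by ring
  rcases hh_struct G P ht R hR with hsmall |
    ⟨u, b, q, a₁, a₂, hqp, ha₁, ha₂, hlen, hx, hy1, hy0, hsupp⟩
  · omega
  have hC3 : q.length ≤ L + 2 := gp_C3 G P L hub q hqp
  by_cases hm : q.length ≤ L
  · have : (t + 1) * q.length ≤ (t + 1) * L := Nat.mul_le_mul_left _ hm
    omega
  have hm' : q.length = L + 1 ∨ q.length = L + 2 := by omega
  -- key endpoint facts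
  have hxa : ∀ u0 : Vp V k, x = inl u0 → a₁ = 0 ∧ u0 = u := by
    intro u0 hx0
    rcases hx with ⟨hx1, hx2⟩ | ⟨ip, hx1⟩
    · rw [hx0] at hx1
      exact ⟨hx2, by injection hx1⟩
    · rw [hx0] at hx1
      exact absurd hx1 (by simp)
  have hya : ∀ b0 : Vp V k, y = inl b0 → a₂ = 0 := by
    intro b0 hy0'
    by_contra hne
    obtain ⟨ip, hip⟩ := hy1 (by omega)
    rw [hy0'] at hip
    exact absurd hip (by simp)
  rcases hm' with hm1 | hm2
  · -- length L+1 : at least one end of q is a leaf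
    have hleaf : (∃ pu, u = inr pu) ∨ (∃ pb, b = inr pb) := by
      rcases hu : u with ua | pu
      · rcases hb : b with ba | pb
        · exfalso
          subst hu
          subst hb
          have := gp_C1 G P L hub q hqp
          omega
        · exact Or.inr ⟨pb, rfl⟩
      · exact Or.inl ⟨pu, rfl⟩
    have hbound : a₁ = 0 ∨ a₂ = 0 := by
      rcases hleaf with ⟨pu, rfl⟩ | ⟨pb, rfl⟩
      · have hm : (inl (inr pu) : WW G P t) ∈ R.support :=
          hsupp _ q.start_mem_support
        rcases mem_end_of_unique_nbr (hh_leaf_unique_nbr G P ht pu) R hR hm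
          with hxx | hyy
        · exact Or.inl (hxa _ hxx.symm).1
        · exact Or.inr (hya _ hyy.symm)
      · have hm : (inl (inr pb) : WW G P t) ∈ R.support :=
          hsupp _ q.end_mem_support
        rcases mem_end_of_unique_nbr (hh_leaf_unique_nbr G P ht pb) R hR hm
          with hxx | hyy
        · -- x = inl (inr pb) : then u = inr pb = b, i.e. q is a closed path: length 0
          have := (hxa _ hxx.symm).2
          subst this
          have := path_self_length q hqp
          omega
        · exact Or.inr (hya _ hyy.symm)
    have : (t + 1) * q.length = (t + 1) * L + t + 1 := by rw [hm1]; ring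
    omega
  · -- length L+2 : both ends of q are leaves
    obtain ⟨pu, rfl⟩ : ∃ pu, u = inr pu := by
      rcases hu : u with ua | pu
      · exfalso
        subst hu
        have := gp_C2 G P L hub q hqp
        omega
      · exact ⟨pu, rfl⟩
    obtain ⟨pb, rfl⟩ : ∃ pb, b = inr pb := by
      rcases hb : b with ba | pb
      · exfalso
        subst hb
        have := gp_C2' G P L hub q hqp
        omega
      · exact ⟨pb, rfl⟩
    have hne : (inr pu : Vp V k) ≠ inr pb := by
      intro hc
      obtain rfl : pu = pb := by injection hc
      have := path_self_length q hqp
      omega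
    have hmu : (inl (inr pu) : WW G P t) ∈ R.support := hsupp _ q.start_mem_support
    have hmb : (inl (inr pb) : WW G P t) ∈ R.support := hsupp _ q.end_mem_support
    have ha10 : a₁ = 0 ∧ a₂ = 0 := by
      rcases mem_end_of_unique_nbr (hh_leaf_unique_nbr G P ht pu) R hR hmu
        with hxx | hyy
      · rcases mem_end_of_unique_nbr (hh_leaf_unique_nbr G P ht pb) R hR hmb
          with hxx' | hyy'
        · exfalso
          apply hne
          have : (inl (inr pu) : WW G P t) = inl (inr pb) := hxx.trans hxx'.symm
          injection this
        · exact ⟨(hxa _ hxx.symm).1, hya _ hyy'.symm⟩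
      · -- y = inl (inr pu): then a₂ = 0 and also inl pb must be x
        exfalso
        rcases mem_end_of_unique_nbr (hh_leaf_unique_nbr G P ht pb) R hR hmb
          with hxx' | hyy'
        · have := (hxa _ hxx'.symm).2
          exact hne this.symm
        · apply hne
          have : (inl (inr pu) : WW G P t) = inl (inr pb) := hyy.trans hyy'.symm
          injection this
    have : (t + 1) * q.length = (t + 1) * L + 2 * t + 2 := by rw [hm2]; ring
    omega

end UpperBound


section Connectivity

variable {t : ℕ}

lemma gp_connected (hG : G.Connected) : (Gp G P).Connected := by
  have hinl : ∀ a b : V, (Gp G P).Reachable (inl a) (inl b) := by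
    intro a b
    exact ((hG a b).elim (fun w => ⟨w.map (inlHom G P)⟩))
  have hleaf : ∀ p : Fin k × Bool,
      (Gp G P).Reachable (inr p) (inl (attachV G P p)) := by
    intro p
    exact (Walk.cons ((gp_adj_inr_inl G P).mpr rfl) Walk.nil).reachable
  have hpre : (Gp G P).Preconnected := by
    intro x y
    rcases x with a | p
    · rcases y with b | q
      · exact hinl a b
      · exact ((hinl a (attachV G P q)).trans (hleaf q).symm)
    · rcases y with b | q
      · exact (hleaf p).trans (hinl _ b)
      · exact ((hleaf p).trans (hinl _ (attachV G P q))).trans (hleaf q).symm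
  have : Nonempty V := hG.nonempty
  haveI : Nonempty (Vp V k) := ⟨inl this.some⟩
  exact Connected.mk hpre

lemma hh_connected (hG : G.Connected) (ht : 1 ≤ t) : (HH G P t).Connected := by
  have hgp := gp_connected G P hG
  have hinl : ∀ a b : Vp V k, (HH G P t).Reachable (inl a) (inl b) := by
    intro a b
    exact (hgp a b).elim (fun w => ⟨liftWalk G P ht w⟩)
  have hint : ∀ (e : Ep G P) (j : Fin t),
      (HH G P t).Reachable (inr (e, j)) (inl e.1.2) := by
    intro e j
    exact ((ascFrom G P e (t - 1 - (j : ℕ)) (j : ℕ) (by omega)).copy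
      (by congr 1) rfl).reachable
  have hpre : (HH G P t).Preconnected := by
    intro x y
    rcases x with a | ⟨e, j⟩
    · rcases y with b | ⟨e', j'⟩
      · exact hinl a b
      · exact (hinl a e'.1.2).trans (hint e' j').symm
    · rcases y with b | ⟨e', j'⟩
      · exact (hint e j).trans (hinl _ b)
      · exact ((hint e j).trans (hinl _ _)).trans (hint e' j').symm
  have : Nonempty V := hG.nonempty
  haveI : Nonempty (WW G P t) := ⟨inl (inl this.some)⟩
  exact Connected.mk hpre

end Connectivity

section LongestPaths

variable {t : ℕ}

/-- the lifted longest paths in the subdivision -/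
noncomputable def QQ (ht : 1 ≤ t) (i : Fin k) :
    (HH G P t).Walk (inl (inr (i, false))) (inl (inr (i, true))) :=
  liftWalk G P ht (Pp G P i)

lemma QQ_length (ht : 1 ≤ t) (i : Fin k) :
    (QQ G P ht i).length = (t + 1) * ((P i).2.2.length + 2) := by
  rw [QQ, liftWalk_length, Pp_length]

lemma QQ_isPath (ht : 1 ≤ t) (i : Fin k) (hp : (P i).2.2.IsPath) :
    (QQ G P ht i).IsPath :=
  liftWalk_isPath G P ht _ (Pp_isPath G P i hp)

end LongestPaths


section Phi

variable {t : ℕ} (hGc : G.Connected)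

/-- distance in `G'` to the support of the extended path `Pp i` -/
noncomputable def dS (i : Fin k) (u : Vp V k) : ℕ :=
  sInf {d : ℕ | ∃ y ∈ (Pp G P i).support, (Gp G P).dist u y = d}

lemma dS_exists (i : Fin k) (u : Vp V k) :
    ∃ y ∈ (Pp G P i).support, (Gp G P).dist u y = dS G P i u := by
  have hne : {d : ℕ | ∃ y ∈ (Pp G P i).support, (Gp G P).dist u y = d}.Nonempty :=
    ⟨_, ⟨inr (i, false), by simp, rfl⟩⟩
  exact Nat.sInf_mem hne

lemma dS_le (i : Fin k) (u : Vp V k) {y : Vp V k} (hy : y ∈ (Pp G P i).support) :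
    dS G P i u ≤ (Gp G P).dist u y :=
  Nat.sInf_le ⟨y, hy, rfl⟩

lemma dS_zero (i : Fin k) {u : Vp V k} (hu : u ∈ (Pp G P i).support) :
    dS G P i u = 0 := by
  have h := dS_le G P i u hu
  have h2 : (Gp G P).dist u u = 0 := SimpleGraph.dist_self
  omega

include hGc

lemma dS_pos (i : Fin k) {u : Vp V k} (hu : u ∉ (Pp G P i).support) :
    1 ≤ dS G P i u := by
  obtain ⟨y, hy, hd⟩ := dS_exists G P i u
  rcases Nat.eq_zero_or_pos (dS G P i u) with h0 | h1
  · rw [h0] at hd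
    have : u = y := ((gp_connected G P hGc).dist_eq_zero_iff).mp hd
    exact absurd (this ▸ hy) hu
  · omega

lemma dS_lip (i : Fin k) {u v : Vp V k} (huv : (Gp G P).Adj u v) :
    dS G P i u ≤ dS G P i v + 1 := by
  obtain ⟨y, hy, hd⟩ := dS_exists G P i v
  have htri : (Gp G P).dist u y ≤ (Gp G P).dist u v + (Gp G P).dist v y :=
    (gp_connected G P hGc).dist_triangle
  have h1 : (Gp G P).dist u v ≤ 1 := by
    have := SimpleGraph.dist_le (Walk.cons huv Walk.nil)
    simpa using this
  have := dS_le G P i u hy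
  omega

omit hGc

/-- the potential function: a lower bound for the distance to `QQ i` -/
noncomputable def phiF (i : Fin k) : WW G P t → ℕ := fun w =>
  match w with
  | inl u => (t + 1) * dS G P i u
  | inr (e, j) =>
      if s(e.1.1, e.1.2) ∈ (Pp G P i).edges then 0
      else min ((t + 1) * dS G P i e.1.1 + ((j : ℕ) + 1))
               ((t + 1) * dS G P i e.1.2 + (t - (j : ℕ)))

lemma phiF_zero (ht : 1 ≤ t) (i : Fin k) :
    ∀ w ∈ (QQ G P ht i).support, phiF G P i w = 0 := by
  intro w hw
  rcases liftWalk_mem_support G P ht (Pp G P i) w hw with ⟨z, hz, rfl⟩ | ⟨e, j, rfl, he⟩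
  · simp [phiF, dS_zero G P i hz]
  · simp [phiF, he]

include hGc

lemma phiF_lip (ht : 1 ≤ t) (i : Fin k) {a b : WW G P t}
    (hab : (HH G P t).Adj a b) : phiF G P i a ≤ phiF G P i b + 1 := by
  rcases a with u | ⟨e, j⟩ <;> rcases b with v | ⟨e', j'⟩
  · exact absurd hab (hh_adj_inl_inl G P t)
  · -- inl u ~ inr (e', j')
    rw [hh_adj_inl_inr] at hab
    by_cases he : s(e'.1.1, e'.1.2) ∈ (Pp G P i).edges
    · -- u is an endpoint of an edge of the path, so dS u = 0
      have hu0 : dS G P i u = 0 := by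
        rcases hab with ⟨rfl, -⟩ | ⟨rfl, -⟩
        · exact dS_zero G P i ((Pp G P i).fst_mem_support_of_mem_edges he)
        · exact dS_zero G P i ((Pp G P i).snd_mem_support_of_mem_edges he)
      simp [phiF, he, hu0]
    · have hl1 := dS_lip G P hGc i e'.2.1
      have hl2 := dS_lip G P hGc i e'.2.1.symm
      have e1 : (t+1) * dS G P i e'.1.1 ≤ (t+1) * dS G P i e'.1.2 + (t+1) := by
        calc (t+1) * dS G P i e'.1.1 ≤ (t+1) * (dS G P i e'.1.2 + 1) :=
              Nat.mul_le_mul_left _ hl1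
        _ = (t+1) * dS G P i e'.1.2 + (t+1) := by ring
      have e2 : (t+1) * dS G P i e'.1.2 ≤ (t+1) * dS G P i e'.1.1 + (t+1) := by
        calc (t+1) * dS G P i e'.1.2 ≤ (t+1) * (dS G P i e'.1.1 + 1) :=
              Nat.mul_le_mul_left _ hl2
        _ = (t+1) * dS G P i e'.1.1 + (t+1) := by ring
      rcases hab with ⟨rfl, hj⟩ | ⟨rfl, hj⟩ <;>
        · show phiF G P i (inl _) ≤ phiF G P i (inr (e', j')) + 1
          simp only [phiF]
          rw [if_neg he]
          generalize (t+1) * dS G P i e'.1.1 = A at *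
          generalize (t+1) * dS G P i e'.1.2 = B at *
          omega
  · -- inr ~ inl
    have hab' := hab.symm
    rw [hh_adj_inl_inr] at hab'
    by_cases he : s(e.1.1, e.1.2) ∈ (Pp G P i).edges
    · simp [phiF, he]
    · show phiF G P i (inr (e, j)) ≤ phiF G P i (inl v) + 1
      simp only [phiF]
      rw [if_neg he]
      generalize hA : (t+1) * dS G P i e.1.1 = A at *
      generalize hB : (t+1) * dS G P i e.1.2 = B at *
      rcases hab' with ⟨rfl, hj⟩ | ⟨rfl, hj⟩
      · rw [hA]; omega
      · rw [hB]; omega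
  · -- inr ~ inr
    rw [hh_adj_inr_inr] at hab
    obtain ⟨rfl, hj⟩ := hab
    by_cases he : s(e.1.1, e.1.2) ∈ (Pp G P i).edges
    · simp [phiF, he]
    · simp only [phiF]
      rw [if_neg he, if_neg he]
      have hjt : (j : ℕ) < t := j.2
      have hjt' : (j' : ℕ) < t := j'.2
      generalize (t+1) * dS G P i e.1.1 = A
      generalize (t+1) * dS G P i e.1.2 = B
      omega

end Phi


section PdfBound

variable {t : ℕ} (hGc : G.Connected)
include hGc

lemma phiF_le_along (ht : 1 ≤ t) (i : Fin k) :
    ∀ {a b : WW G P t} (R : (HH G P t).Walk a b),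
      phiF G P i a ≤ phiF G P i b + R.length := by
  intro a b R
  induction R with
  | nil => simp
  | @cons a c b h p ih =>
    have h1 := phiF_lip G P hGc ht i h
    simp only [Walk.length_cons]
    omega

lemma distToWalk_ge (ht : 1 ≤ t) (i : Fin k) (x : WW G P t) :
    phiF G P i x ≤ distToWalk (HH G P t) x (QQ G P ht i) := by
  have hne : {d : ℕ | ∃ y ∈ (QQ G P ht i).support, (HH G P t).dist x y = d}.Nonempty :=
    ⟨_, ⟨_, (QQ G P ht i).start_mem_support, rfl⟩⟩
  obtain ⟨y, hy, hd⟩ := Nat.sInf_mem hne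
  obtain ⟨R, hR⟩ := ((hh_connected G P hGc ht) x y).exists_walk_length_eq_dist
  have h1 := phiF_le_along G P hGc ht i R
  have h2 := phiF_zero G P ht i y hy
  rw [distToWalk]
  omega

omit hGc in
lemma exS (hk2 : 2 ≤ k) (hnc' : ∀ w : V, ∃ i, w ∉ (P i).2.2.support) :
    ∀ u : Vp V k, ∃ i, u ∉ (Pp G P i).support := by
  intro u
  rcases u with w | p
  · obtain ⟨i, hi⟩ := hnc' w
    exact ⟨i, fun hm => hi ((inl_mem_Pp_support_iff G P i w).mp hm)⟩
  · obtain ⟨i, hi⟩ : ∃ i : Fin k, i ≠ p.1 := by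
      by_contra h
      push_neg at h
      have h0 := h ⟨0, by omega⟩
      have h1 := h ⟨1, by omega⟩
      have : (⟨0, by omega⟩ : Fin k) = ⟨1, by omega⟩ := h0.trans h1.symm
      simp [Fin.ext_iff] at this
    exact ⟨i, fun hm => hi (((inr_mem_Pp_support_iff G P i p).mp hm).symm ▸ rfl)⟩

lemma sum_phi_ge (ht : 1 ≤ t) (hk2 : 2 ≤ k)
    (hnc' : ∀ w : V, ∃ i, w ∉ (P i).2.2.support) (x : WW G P t) :
    t + 1 ≤ ∑ i, phiF G P i x := by
  have hsingle : ∀ i : Fin k, phiF G P i x ≤ ∑ l, phiF G P l x := fun i =>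
    Finset.single_le_sum (f := fun l => phiF G P l x) (fun l _ => Nat.zero_le _)
      (Finset.mem_univ i)
  rcases x with u | ⟨e, j⟩
  · obtain ⟨i, hi⟩ := exS G P hk2 hnc' u
    have h1 : 1 ≤ dS G P i u := dS_pos G P hGc i hi
    have h2 : t + 1 ≤ phiF G P i (inl u : WW G P t) := by
      show t + 1 ≤ (t + 1) * dS G P i u
      calc t + 1 = (t + 1) * 1 := by ring
      _ ≤ (t + 1) * dS G P i u := Nat.mul_le_mul_left _ h1
    exact le_trans h2 (hsingle i)
  · obtain ⟨i, hui⟩ := exS G P hk2 hnc' e.1.1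
    have hne_i : s(e.1.1, e.1.2) ∉ (Pp G P i).edges := fun hm =>
      hui ((Pp G P i).fst_mem_support_of_mem_edges hm)
    have hdu : 1 ≤ dS G P i e.1.1 := dS_pos G P hGc i hui
    have hjt : (j : ℕ) < t := j.2
    have hphii : phiF G P i (inr (e, j)) =
        min ((t + 1) * dS G P i e.1.1 + ((j : ℕ) + 1))
            ((t + 1) * dS G P i e.1.2 + (t - (j : ℕ))) := by
      simp only [phiF]
      rw [if_neg hne_i]
    have hAu : t + 1 ≤ (t + 1) * dS G P i e.1.1 := by
      calc t + 1 = (t + 1) * 1 := by ring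
      _ ≤ _ := Nat.mul_le_mul_left _ hdu
    rcases Classical.em (e.1.2 ∈ (Pp G P i).support) with hvi | hvi
    · -- second endpoint on the path; use a second index
      have hphi1 : t - (j : ℕ) ≤ phiF G P i (inr (e, j)) := by
        rw [hphii]
        refine le_min (by omega) (by omega)
      obtain ⟨i', hvi'⟩ := exS G P hk2 hnc' e.1.2
      have hii' : i ≠ i' := fun hc => hvi' (hc ▸ hvi)
      have hne_i' : s(e.1.1, e.1.2) ∉ (Pp G P i').edges := fun hm =>
        hvi' ((Pp G P i').snd_mem_support_of_mem_edges hm)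
      have hdv' : 1 ≤ dS G P i' e.1.2 := dS_pos G P hGc i' hvi'
      have hAv' : t + 1 ≤ (t + 1) * dS G P i' e.1.2 := by
        calc t + 1 = (t + 1) * 1 := by ring
        _ ≤ _ := Nat.mul_le_mul_left _ hdv'
      have hphi2 : (j : ℕ) + 1 ≤ phiF G P i' (inr (e, j)) := by
        simp only [phiF]
        rw [if_neg hne_i']
        refine le_min (by omega) (by omega)
      have hpair : phiF G P i (inr (e, j)) + phiF G P i' (inr (e, j)) ≤
          ∑ l, phiF G P l (inr (e, j)) := by
        rw [← Finset.sum_pair (f := fun l => phiF G P l (inr (e, j))) hii']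
        exact Finset.sum_le_sum_of_subset (Finset.subset_univ _)
      omega
    · -- both endpoints off the path `i`
      have hdv : 1 ≤ dS G P i e.1.2 := dS_pos G P hGc i hvi
      have hAv : t + 1 ≤ (t + 1) * dS G P i e.1.2 := by
        calc t + 1 = (t + 1) * 1 := by ring
        _ ≤ _ := Nat.mul_le_mul_left _ hdv
      have : t + 1 ≤ phiF G P i (inr (e, j)) := by
        rw [hphii]
        refine le_min (by omega) (by omega)
      exact le_trans this (hsingle i)

lemma pdf_ge (ht : 1 ≤ t) (hk2 : 2 ≤ k)
    (hnc' : ∀ w : V, ∃ i, w ∉ (P i).2.2.support) :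
    t + 1 ≤ pdf (HH G P t)
      (fun i => ⟨inl (inr (i, false)), inl (inr (i, true)), QQ G P ht i⟩) := by
  have hx0 : Nonempty (WW G P t) := ⟨inl (inl hGc.nonempty.some)⟩
  have hne : {s : ℕ | ∃ x : WW G P t, s = ∑ i,
      distToWalk (HH G P t) x (QQ G P ht i)}.Nonempty :=
    ⟨_, ⟨hx0.some, rfl⟩⟩
  rw [pdf]
  obtain ⟨x, hx⟩ := Nat.sInf_mem hne
  show t + 1 ≤ sInf _
  rw [hx]
  calc t + 1 ≤ ∑ i, phiF G P i x := sum_phi_ge G P hGc ht hk2 hnc' x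
  _ ≤ ∑ i, distToWalk (HH G P t) x (QQ G P ht i) :=
      Finset.sum_le_sum (fun i _ => distToWalk_ge G P hGc ht i x)

end PdfBound

section Card

lemma ep_nonempty (hk1 : 1 ≤ k) : Nonempty (Ep G P) := by
  have hp : (Gp G P).Adj (inl (attachV G P (⟨0, by omega⟩, false)))
      (inr (⟨0, by omega⟩, false)) := (gp_adj_inl_inr G P).mpr rfl
  rcases lt_or_gt_of_ne (fun hc => hp.ne (ordv_inj hc)) with h | h
  · exact ⟨⟨(_, _), hp, h⟩⟩
  · exact ⟨⟨(_, _), hp.symm, h⟩⟩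

lemma card_WW (t : ℕ) : Fintype.card (WW G P t) =
    Fintype.card (Vp V k) + Fintype.card (Ep G P) * t := by
  simp [Fintype.card_sum, Fintype.card_prod, Fintype.card_fin]

end Card

end Construction
end NSB

open NSB

/-- If for some `3 ≤ k ≤ 6` there is a connected graph with `k` longest paths having no
common vertex, then no sublinear function `g` bounds the path-distance-function: for every
sublinear `g` there is a connected graph `H` of some order `n` with a family `𝒬` of `k`
longest paths such that `f(H,𝒬) > g(n)`. -/
theorem no_sublinear_bound_of_counterexample (k : ℕ) (hk3 : 3 ≤ k) (hk6 : k ≤ 6)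
    {V : Type} [Fintype V] (G : SimpleGraph V) (hG : G.Connected)
    (P : Fin k → Σ u : V, Σ v : V, G.Walk u v)
    (hinj : Function.Injective P) (hlong : ∀ i, IsLongestPath G (P i).2.2)
    (hnc : ¬ ∃ x : V, ∀ i, x ∈ (P i).2.2.support) :
    ∀ g : ℕ → ℝ, Filter.Tendsto (fun n : ℕ => g n / (n : ℝ)) Filter.atTop (nhds 0) →
      ∃ (W : Type) (instW : Fintype W) (H : SimpleGraph W),
        H.Connected ∧
        ∃ Q : Fin k → Σ u : W, Σ v : W, H.Walk u v,
          Function.Injective Q ∧ (∀ i, IsLongestPath H (Q i).2.2) ∧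
          g (@Fintype.card W instW) < (pdf H Q : ℝ) := by
  intro g hg
  classical
  have hk2 : 2 ≤ k := by omega
  set i0 : Fin k := ⟨0, by omega⟩ with hi0
  set L : ℕ := (P i0).2.2.length with hLdef
  have hub : ∀ (a b : V) (q : G.Walk a b), q.IsPath → q.length ≤ L :=
    fun a b q hq => (hlong i0).2 a b q hq
  have hpaths : ∀ i, (P i).2.2.IsPath := fun i => (hlong i).1
  have hleni : ∀ i, (P i).2.2.length = L := fun i =>
    le_antisymm ((hlong i0).2 _ _ _ (hlong i).1) ((hlong i).2 _ _ _ (hlong i0).1)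
  have hnc' : ∀ x : V, ∃ i, x ∉ (P i).2.2.support := by
    push_neg at hnc; exact hnc
  -- the two cardinality constants
  set A : ℕ := Fintype.card (Vp V k) with hAdef
  haveI : Nonempty (Ep G P) := ep_nonempty G P (by omega)
  set B : ℕ := Fintype.card (Ep G P) with hBdef
  have hB1 : 1 ≤ B := Fintype.card_pos
  -- choose t
  have hε : (0:ℝ) < 1 / (2 * B) := by positivity
  obtain ⟨N, hN⟩ := (Metric.tendsto_atTop.mp hg) (1 / (2 * B)) hε
  set t : ℕ := max 1 (max N A) with htdef
  have ht : 1 ≤ t := le_max_left _ _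
  have htN : N ≤ t := le_trans (le_max_left _ _) (le_max_right _ _)
  have htA : A ≤ t := le_trans (le_max_right _ _) (le_max_right _ _)
  refine ⟨WW G P t, inferInstance, HH G P t, hh_connected G P hG ht,
    (fun i => ⟨inl (inr (i, false)), inl (inr (i, true)), QQ G P ht i⟩), ?_, ?_, ?_⟩
  · -- injectivity
    intro i i' h
    have := congrArg Sigma.fst h
    simp only at this
    have : (i, false) = (i', false) := by
      injection (by injection this : (inr (i, false) : Vp V k) = inr (i', false))
    injection this
  · -- longest paths
    intro i
    refine ⟨QQ_isPath G P ht i (hpaths i), ?_⟩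
    intro a b q hq
    have h1 := hh_path_le G P L hub ht q hq
    have h2 : (QQ G P ht i).length = (t + 1) * (L + 2) := by
      rw [QQ_length, hleni]
    show q.length ≤ (QQ G P ht i).length
    omega
  · -- the numeric bound
    have hcard : Fintype.card (WW G P t) = A + B * t := card_WW G P t
    have hpdf := pdf_ge G P hG ht hk2 hnc'
    set n : ℕ := Fintype.card (WW G P t) with hndef
    have hBt : t ≤ B * t := Nat.le_mul_of_pos_left t (by omega)
    have hnN : N ≤ n := by omega
    have hn1 : 1 ≤ n := by omega
    have hd := hN n hnN
    rw [Real.dist_eq, sub_zero] at hd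
    have hn0 : (0:ℝ) < (n:ℝ) := by positivity
    have h1 : g n / n < 1 / (2 * B) := lt_of_le_of_lt (le_abs_self _) hd
    have h2 : g n < 1 / (2 * B) * n := by
      rw [div_lt_iff₀ hn0] at h1
      exact h1
    have hn2Bt : (n:ℝ) ≤ 2 * B * t := by
      have he : 2 * B * t = B * t + B * t := by ring
      have : n ≤ 2 * B * t := by omega
      exact_mod_cast this
    have h3 : 1 / (2 * B) * (n:ℝ) ≤ t := by
      have hpos : (0:ℝ) < 2 * B := by positivity
      rw [div_mul_eq_mul_div, one_mul, div_le_iff₀ hpos]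
      calc (n:ℝ) ≤ 2 * B * t := hn2Bt
      _ = (t:ℝ) * (2 * B) := by ring
    have h4 : ((t:ℝ) + 1) ≤ (pdf (HH G P t)
        (fun i => ⟨inl (inr (i, false)), inl (inr (i, true)), QQ G P ht i⟩) : ℝ) := by
      exact_mod_cast hpdf
    calc g n < 1 / (2 * B) * n := h2
    _ ≤ t := h3
    _ < (t:ℝ) + 1 := by linarith
    _ ≤ _ := h4
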